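/- Let q : [0,∞) → [0,∞) be a bounded function with q(z) → 0 as z → ∞. Then there exists a continuous function Q : [0,∞) → (0,∞), linear on each integer interval [k, k+1] for k = 0, 1, 2, …, such that: q(z) ≤ Q(z) for all z ∈ [0,∞); Q(z) → 0 as z → ∞; Q is monotonically decreasing; and Q'(z)·z + Q(z) ≥ 0 for every z ∈ [0,∞) that is not a nonnegative integer (where Q' is the slope of the relevant linear piece). -/
import Mathlib


open Set Filter Topology

namespace Stmt7Aux
variable (q : ℝ → ℝ)

noncomputable def s (k : ℕ) : ℝ := sSup (q '' Set.Ici (k : ℝ))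

noncomputable def u (k : ℕ) : ℝ := s q (k - 1)

noncomputable def m : ℕ → ℝ
  | 0 => u q 0
  | k + 1 => max (m k) (u q (k + 1) * ((k : ℝ) + 2))

noncomputable def c (k : ℕ) : ℝ := (m q k + 1) / ((k : ℝ) + 1)

noncomputable def Q (z : ℝ) : ℝ :=
  c q ⌊z⌋₊ + (z - (⌊z⌋₊ : ℝ)) * (c q (⌊z⌋₊ + 1) - c q ⌊z⌋₊)

noncomputable def A (k : ℕ) (z : ℝ) : ℝ :=
  c q k + (z - (k : ℝ)) * (c q (k + 1) - c q k)

lemma A_cont (k : ℕ) : Continuous (A q k) := by unfold A; fun_prop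

variable {q}
variable {M : ℝ} (hM : ∀ z, 0 ≤ z → q z ≤ M) (hqnn : ∀ z, 0 ≤ z → 0 ≤ q z)

lemma s_ne (q : ℝ → ℝ) (k : ℕ) : (q '' Set.Ici (k : ℝ)).Nonempty :=
  ⟨q k, (k : ℝ), Set.self_mem_Ici, rfl⟩

section sfacts
include hM

lemma s_bdd (k : ℕ) : BddAbove (q '' Set.Ici (k : ℝ)) :=
  ⟨M, by rintro y ⟨z, hz, rfl⟩; exact hM z ((Nat.cast_nonneg k).trans hz)⟩

lemma le_s {k : ℕ} {z : ℝ} (hz : (k : ℝ) ≤ z) : q z ≤ s q k :=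
  le_csSup (s_bdd hM k) ⟨z, hz, rfl⟩

include hqnn in
lemma s_nonneg (k : ℕ) : 0 ≤ s q k :=
  (hqnn k (Nat.cast_nonneg k)).trans (le_s hM le_rfl)

lemma s_anti : Antitone (s q) := by
  apply antitone_nat_of_succ_le
  intro k
  apply csSup_le (s_ne q (k + 1))
  rintro y ⟨z, hz, rfl⟩
  exact le_s hM (le_trans (by push_cast; linarith) hz)

lemma s_le {k : ℕ} {ε : ℝ} (h : ∀ z, (k : ℝ) ≤ z → q z ≤ ε) : s q k ≤ ε := by
  apply csSup_le (s_ne q k)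
  rintro y ⟨z, hz, rfl⟩
  exact h z hz

end sfacts

-- u facts
lemma u_succ (k : ℕ) : u q (k + 1) = s q k := rfl
lemma u_zero : u q 0 = s q 0 := rfl

include hM in
lemma u_anti : Antitone (u q) := by
  intro a b hab
  cases a with
  | zero => cases b with
    | zero => exact le_rfl
    | succ b => exact s_anti hM (Nat.zero_le b)
  | succ a => cases b with
    | zero => omega
    | succ b => exact s_anti hM (by omega)

include hM hqnn in
lemma u_nonneg (k : ℕ) : 0 ≤ u q k := s_nonneg hM hqnn _

-- m facts
include hM hqnn in
lemma m_nonneg (k : ℕ) : 0 ≤ m q k := by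
  cases k with
  | zero => exact u_nonneg hM hqnn 0
  | succ k => exact le_max_of_le_right (mul_nonneg (u_nonneg hM hqnn _) (by positivity))

lemma m_mono : Monotone (m q) := by
  apply monotone_nat_of_le_succ
  intro k
  exact le_max_left _ _

lemma m_ge (k : ℕ) : u q k * ((k : ℝ) + 1) ≤ m q k := by
  cases k with
  | zero => simp [m, u_zero]
  | succ k => exact le_trans (by push_cast; ring_nf; exact le_rfl) (le_max_right _ _)

include hM hqnn in
lemma m_ge' (k : ℕ) : u q (k + 1) * ((k : ℝ) + 1) ≤ m q k :=
  le_trans (mul_le_mul_of_nonneg_right (u_anti hM (Nat.le_succ k))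
    (by positivity)) (m_ge k)

-- c facts
lemma c_mul (k : ℕ) : c q k * ((k : ℝ) + 1) = m q k + 1 := by
  rw [c, div_mul_cancel₀]
  positivity

include hM hqnn in
lemma c_pos (k : ℕ) : 0 < c q k := by
  have := m_nonneg hM hqnn (q := q) k
  rw [c]; positivity

include hM hqnn in
lemma c_anti : Antitone (c q) := by
  apply antitone_nat_of_succ_le
  intro k
  have h1 := m_ge' hM hqnn (q := q) k
  have h0 := m_nonneg hM hqnn (q := q) k
  have hu := u_nonneg hM hqnn (q := q) (k + 1)
  rw [c, c, div_le_div_iff₀ (by positivity) (by positivity)]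
  rcases max_cases (m q k) (u q (k + 1) * ((k : ℝ) + 2)) with ⟨he, _⟩ | ⟨he, _⟩ <;>
    rw [m, he] <;> push_cast <;> nlinarith

include hM hqnn in
lemma u_le_c (k : ℕ) : u q k ≤ c q k := by
  rw [c, le_div_iff₀ (by positivity)]
  have := m_ge (q := q) k
  linarith

lemma c_key (k : ℕ) : c q k * ((k : ℝ) + 1) ≤ c q (k + 1) * ((k : ℝ) + 2) := by
  have h2 : ((k : ℝ) + 1) + 1 = (k : ℝ) + 2 := by ring
  rw [c_mul, ← h2, ← Nat.cast_succ, c_mul]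
  have := m_mono (q := q) (Nat.le_succ k)
  linarith


-- limits
include hM hqnn in
lemma s_lim (hqlim : Tendsto q atTop (𝓝 0)) : Tendsto (s q) atTop (𝓝 0) := by
  rw [Metric.tendsto_atTop]
  intro ε hε
  obtain ⟨Z, hZ⟩ := (Metric.tendsto_atTop.mp hqlim) (ε / 2) (by linarith)
  refine ⟨⌈Z⌉₊, fun k hk => ?_⟩
  have hsk : s q k ≤ ε / 2 := by
    apply s_le hM
    intro z hz
    have hzZ : Z ≤ z := by
      calc Z ≤ (⌈Z⌉₊ : ℝ) := Nat.le_ceil Z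
        _ ≤ (k : ℝ) := by exact_mod_cast hk
        _ ≤ z := hz
    have := hZ z hzZ
    rw [Real.dist_eq, sub_zero] at this
    exact (le_abs_self _).trans this.le
  have h0 := s_nonneg hM hqnn (q := q) k
  rw [Real.dist_eq, sub_zero, abs_of_nonneg h0]
  linarith

include hM hqnn in
lemma u_lim (hqlim : Tendsto q atTop (𝓝 0)) : Tendsto (u q) atTop (𝓝 0) := by
  rw [Metric.tendsto_atTop]
  intro ε hε
  obtain ⟨N, hN⟩ := Metric.tendsto_atTop.mp (s_lim hM hqnn hqlim) ε hε
  exact ⟨N + 1, fun k hk => by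
    have : u q k = s q (k - 1) := rfl
    rw [this]; exact hN _ (by omega)⟩

include hM hqnn in
lemma m_bound {δ : ℝ} (hδ : 0 ≤ δ) {N : ℕ} (h : ∀ j, N ≤ j → u q j ≤ δ) :
    ∀ k, N ≤ k → m q k ≤ max (m q N) (δ * ((k : ℝ) + 1)) := by
  intro k hk
  induction k, hk using Nat.le_induction with
  | base => exact le_max_left _ _
  | succ k hk ih =>
    show max (m q k) (u q (k + 1) * ((k : ℝ) + 2)) ≤ _
    apply max_le
    · refine ih.trans (max_le_max le_rfl ?_)
      push_cast; nlinarith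
    · apply le_max_of_le_right
      have := h (k + 1) (by omega)
      have hu := u_nonneg hM hqnn (q := q) (k + 1)
      push_cast
      nlinarith

include hM hqnn in
lemma c_lim (hqlim : Tendsto q atTop (𝓝 0)) : Tendsto (c q) atTop (𝓝 0) := by
  rw [Metric.tendsto_atTop]
  intro ε hε
  set δ := ε / 3 with hδdef
  have hδ : 0 < δ := by positivity
  obtain ⟨N, hN⟩ := Metric.tendsto_atTop.mp (u_lim hM hqnn hqlim) δ hδ
  have hN' : ∀ j, N ≤ j → u q j ≤ δ := by
    intro j hj
    have := hN j hj
    rw [Real.dist_eq, sub_zero] at this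
    exact (le_abs_self _).trans this.le
  refine ⟨max N (⌈max (m q N) 1 / δ⌉₊ + 1), fun k hk => ?_⟩
  have hkN : N ≤ k := le_trans (le_max_left _ _) hk
  have hk2 : (⌈max (m q N) 1 / δ⌉₊ + 1 : ℕ) ≤ k := le_trans (le_max_right _ _) hk
  have hk3 : max (m q N) 1 / δ ≤ (k : ℝ) := by
    calc max (m q N) 1 / δ ≤ (⌈max (m q N) 1 / δ⌉₊ : ℝ) := Nat.le_ceil _
      _ ≤ (k : ℝ) := by exact_mod_cast le_trans (Nat.le_succ _) hk2
  have hk4 : max (m q N) 1 ≤ δ * ((k : ℝ) + 1) := by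
    rw [div_le_iff₀ hδ] at hk3
    nlinarith
  have hmb := m_bound hM hqnn hδ.le hN' k hkN
  have hmb2 : m q k ≤ δ * ((k : ℝ) + 1) :=
    hmb.trans (max_le (le_trans (le_max_left _ _) hk4) le_rfl)
  have hc : c q k ≤ 2 * δ := by
    rw [c, div_le_iff₀ (by positivity)]
    have h1 : (1 : ℝ) ≤ δ * ((k : ℝ) + 1) := le_trans (le_max_right _ _) hk4
    nlinarith
  have hcpos := c_pos hM hqnn (q := q) k
  rw [Real.dist_eq, sub_zero, abs_of_nonneg hcpos.le]
  rw [hδdef] at hc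
  linarith

-- Q facts
lemma Q_eq (k : ℕ) {z : ℝ} (hz : z ∈ Set.Icc (k : ℝ) ((k : ℝ) + 1)) :
    Q q z = c q k + (z - (k : ℝ)) * (c q (k + 1) - c q k) := by
  obtain ⟨h1, h2⟩ := hz
  rcases eq_or_lt_of_le h2 with he | hlt
  · have hf : ⌊z⌋₊ = k + 1 := by
      rw [he, show ((k : ℝ) + 1) = ((k + 1 : ℕ) : ℝ) by push_cast; ring,
        Nat.floor_natCast]
    rw [Q, hf, he]; push_cast; ring
  · have hz0 : 0 ≤ z := le_trans (Nat.cast_nonneg k) h1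
    have hf : ⌊z⌋₊ = k := by rw [Nat.floor_eq_iff hz0]; exact ⟨h1, hlt⟩
    rw [Q, hf]

lemma Q_nat (k : ℕ) : Q q (k : ℝ) = c q k := by
  rw [Q, Nat.floor_natCast]; ring

include hM hqnn in
lemma Q_bounds {z : ℝ} (hz : 0 ≤ z) :
    c q (⌊z⌋₊ + 1) ≤ Q q z ∧ Q q z ≤ c q ⌊z⌋₊ := by
  have h1 : ((⌊z⌋₊ : ℕ) : ℝ) ≤ z := Nat.floor_le hz
  have h2 : z < ((⌊z⌋₊ : ℕ) : ℝ) + 1 := Nat.lt_floor_add_one z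
  have hd : c q (⌊z⌋₊ + 1) ≤ c q ⌊z⌋₊ := c_anti hM hqnn (Nat.le_succ _)
  rw [Q]
  constructor <;> nlinarith

lemma Q_cont : Continuous (Q q) := by
  rw [continuous_iff_continuousAt]
  intro x
  rcases lt_or_ge x 1 with hx | hx
  · apply ContinuousAt.congr ((A_cont q 0).continuousAt)
    filter_upwards [Iio_mem_nhds hx] with z hz
    have hf : ⌊z⌋₊ = 0 := Nat.floor_eq_zero.mpr hz
    rw [A, Q, hf]
  · have hx0 : (0 : ℝ) ≤ x := by linarith
    set k := ⌊x⌋₊ with hk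
    have hk1 : (k : ℝ) ≤ x := Nat.floor_le hx0
    have hk2 : x < (k : ℝ) + 1 := Nat.lt_floor_add_one x
    clear_value k
    rcases eq_or_lt_of_le hk1 with he | hlt
    · -- x is the integer k
      have hkpos : 1 ≤ k := by
        rcases Nat.eq_zero_or_pos k with h0 | h0
        · rw [h0] at he; simp at he; linarith
        · exact h0
      obtain ⟨j, rfl⟩ : ∃ j, k = j + 1 := ⟨k - 1, by omega⟩
      rw [continuousAt_iff_continuous_left_right]
      constructor
      · apply ContinuousWithinAt.congr_of_eventuallyEq
          ((A_cont q j).continuousWithinAt)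
        · filter_upwards [self_mem_nhdsWithin,
            mem_nhdsWithin_of_mem_nhds (Ioi_mem_nhds (show (j : ℝ) < x by
              rw [← he]; push_cast; linarith))] with z hz1 hz2
          exact Q_eq j ⟨le_of_lt hz2, by simp only [Set.mem_Iic] at hz1; rw [← he] at hz1; push_cast at hz1 ⊢; linarith⟩
        · exact Q_eq j ⟨by rw [← he]; push_cast; linarith, by rw [← he]; push_cast; linarith⟩
      · apply ContinuousWithinAt.congr_of_eventuallyEq
          ((A_cont q (j + 1)).continuousWithinAt)
        · filter_upwards [self_mem_nhdsWithin,
            mem_nhdsWithin_of_mem_nhds (Iio_mem_nhds hk2)] with z hz1 hz2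
          exact Q_eq (j + 1) ⟨le_trans he.le hz1, le_of_lt hz2⟩
        · exact Q_eq (j + 1) ⟨hk1, hk2.le⟩
    · -- x is strictly inside (k, k+1)
      apply ContinuousAt.congr ((A_cont q k).continuousAt)
      filter_upwards [Ioo_mem_nhds hlt hk2] with z hz
      exact (Q_eq k ⟨hz.1.le, hz.2.le⟩).symm

end Stmt7Aux


open Stmt7Aux

/-- For every bounded `q : [0,∞) → [0,∞)` with `q(z) → 0` as `z → ∞`
there exists a continuous majorant `Q > 0`, affine on each integer interval `[k,k+1]`,
monotonically decreasing, with `Q(z) → 0` as `z → ∞`, and whose piecewise slopes satisfy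
`Q'(z)·z + Q(z) ≥ 0` at every non-integer `z ≥ 0`. -/
theorem stmt7 (q : ℝ → ℝ)
    (hqnn : ∀ z, 0 ≤ z → 0 ≤ q z)
    (hqbdd : ∃ M : ℝ, ∀ z, 0 ≤ z → q z ≤ M)
    (hqlim : Tendsto q atTop (𝓝 0)) :
    ∃ Q : ℝ → ℝ,
      ContinuousOn Q (Set.Ici 0) ∧
      -- Q is affine on each integer interval [k, k+1]
      (∀ k : ℕ, ∀ z ∈ Set.Icc (k : ℝ) ((k : ℝ) + 1),
        Q z = Q (k : ℝ) + (z - (k : ℝ)) * (Q ((k : ℝ) + 1) - Q (k : ℝ))) ∧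
      -- Q is (strictly) positive
      (∀ z, 0 ≤ z → 0 < Q z) ∧
      -- Q dominates q
      (∀ z, 0 ≤ z → q z ≤ Q z) ∧
      -- Q(z) → 0 as z → ∞
      Tendsto Q atTop (𝓝 0) ∧
      -- Q is monotonically decreasing
      AntitoneOn Q (Set.Ici 0) ∧
      -- Q'(z)·z + Q(z) ≥ 0 at non-integer points (Q' = slope of the linear piece)
      (∀ k : ℕ, ∀ z ∈ Set.Ioo (k : ℝ) ((k : ℝ) + 1),
        0 ≤ (Q ((k : ℝ) + 1) - Q (k : ℝ)) * z + Q z) := by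
  obtain ⟨M, hM⟩ := hqbdd
  refine ⟨Q q, (Q_cont (q := q)).continuousOn, ?_, ?_, ?_, ?_, ?_, ?_⟩
  · -- affine pieces
    intro k z hz
    have h1 : Q q ((k : ℝ) + 1) = c q (k + 1) := by
      rw [show ((k : ℝ) + 1) = ((k + 1 : ℕ) : ℝ) by push_cast; ring, Q_nat]
    rw [Q_eq k hz, Q_nat, h1]
  · -- positivity
    intro z hz
    have h1 := (Q_bounds hM hqnn hz).1
    have h2 := c_pos hM hqnn (q := q) (⌊z⌋₊ + 1)
    linarith
  · -- domination
    intro z hz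
    have h1 : q z ≤ s q ⌊z⌋₊ := le_s hM (Nat.floor_le hz)
    have h2 : s q ⌊z⌋₊ = u q (⌊z⌋₊ + 1) := rfl
    have h3 := u_le_c hM hqnn (q := q) (⌊z⌋₊ + 1)
    have h4 := (Q_bounds hM hqnn hz).1
    linarith
  · -- tendsto 0
    have hc : Tendsto (fun z : ℝ => c q ⌊z⌋₊) atTop (𝓝 0) :=
      (c_lim hM hqnn hqlim).comp tendsto_nat_floor_atTop
    apply squeeze_zero' ?_ ?_ hc
    · filter_upwards [eventually_ge_atTop (0 : ℝ)] with z hz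
      have h1 := (Q_bounds hM hqnn hz).1
      have h2 := c_pos hM hqnn (q := q) (⌊z⌋₊ + 1)
      linarith
    · filter_upwards [eventually_ge_atTop (0 : ℝ)] with z hz
      exact (Q_bounds hM hqnn hz).2
  · -- antitone
    intro x hx y hy hxy
    simp only [Set.mem_Ici] at hx hy
    rcases eq_or_lt_of_le (Nat.floor_mono hxy) with he | hlt
    · have hd : c q (⌊x⌋₊ + 1) ≤ c q ⌊x⌋₊ := c_anti hM hqnn (Nat.le_succ _)
      rw [Q, Q, ← he]
      nlinarith
    · have h1 := (Q_bounds hM hqnn hy).2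
      have h2 := (Q_bounds hM hqnn hx).1
      have h3 : c q ⌊y⌋₊ ≤ c q (⌊x⌋₊ + 1) := c_anti hM hqnn hlt
      linarith
  · -- slope condition
    intro k z hz
    obtain ⟨h1, h2⟩ := hz
    have hQk : Q q (k : ℝ) = c q k := Q_nat k
    have hQk1 : Q q ((k : ℝ) + 1) = c q (k + 1) := by
      rw [show ((k : ℝ) + 1) = ((k + 1 : ℕ) : ℝ) by push_cast; ring, Q_nat]
    have hQz : Q q z = c q k + (z - (k : ℝ)) * (c q (k + 1) - c q k) :=
      Q_eq k ⟨h1.le, h2.le⟩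
    have hkey := c_key (q := q) k
    have hd : c q (k + 1) ≤ c q k := c_anti hM hqnn (Nat.le_succ _)
    rw [hQk, hQk1, hQz]
    nlinarith
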